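/- arXiv:2409.14452 — 5 statements merged into one kernel-verified Lean document; each statement's English description precedes it below -/
import Mathlib

section
/- L²(X,μ) is a flat L^∞(X,μ)-module. Equivalently (equational criterion for flatness over the commutative unital ring L^∞(X,μ)): whenever n ∈ ℕ, r_1,…,r_n ∈ L^∞(X,μ) and m_1,…,m_n ∈ L²(X,μ) satisfy r_1m_1 + ⋯ + r_nm_n = 0 in L²(X,μ), there exist k ∈ ℕ, elements ρ_{ij} ∈ L^∞(X,μ) (1 ≤ i ≤ n, 1 ≤ j ≤ k) and μ_1,…,μ_k ∈ L²(X,μ) such that ∑_{i=1}^n r_i ρ_{ij} = 0 for every j and m_i = ∑_{j=1}^k ρ_{ij} μ_j for every i. -/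
open MeasureTheory Filter Topology
open scoped ENNReal

set_option synthInstance.maxHeartbeats 1000000
set_option maxHeartbeats 1000000

noncomputable section

variable {α : Type*} [MeasurableSpace α] {ν : MeasureTheory.Measure α}

/-- The commutative ring structure on the space of (equivalence classes of) a.e.-defined
complex-valued functions, given by pointwise multiplication. -/
instance AEEqFunCommRing : CommRing (α →ₘ[ν] ℂ) where
  __ := AEEqFun.instAddCommGroup (α := α) (μ := ν) (γ := ℂ)
  __ := AEEqFun.instCommMonoid (α := α) (μ := ν) (γ := ℂ)
  left_distrib f g h := by
    apply AEEqFun.ext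
    filter_upwards [AEEqFun.coeFn_mul f (g + h), AEEqFun.coeFn_add g h,
      AEEqFun.coeFn_add (f * g) (f * h), AEEqFun.coeFn_mul f g, AEEqFun.coeFn_mul f h]
      with x h1 h2 h3 h4 h5
    simp only [Pi.mul_apply, Pi.add_apply] at h1 h2 h3 h4 h5
    simp [h1, h2, h3, h4, h5, mul_add]
  right_distrib f g h := by
    apply AEEqFun.ext
    filter_upwards [AEEqFun.coeFn_mul (f + g) h, AEEqFun.coeFn_add f g,
      AEEqFun.coeFn_add (f * h) (g * h), AEEqFun.coeFn_mul f h, AEEqFun.coeFn_mul g h]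
      with x h1 h2 h3 h4 h5
    simp only [Pi.mul_apply, Pi.add_apply] at h1 h2 h3 h4 h5
    simp [h1, h2, h3, h4, h5, add_mul]
  zero_mul f := by
    apply AEEqFun.ext
    filter_upwards [AEEqFun.coeFn_mul (0 : α →ₘ[ν] ℂ) f,
      AEEqFun.coeFn_zero (α := α) (μ := ν) (β := ℂ)] with x h1 h2
    simp only [Pi.mul_apply, Pi.zero_apply] at h1 h2 ⊢
    simp [h1, h2]
  mul_zero f := by
    apply AEEqFun.ext
    filter_upwards [AEEqFun.coeFn_mul f (0 : α →ₘ[ν] ℂ),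
      AEEqFun.coeFn_zero (α := α) (μ := ν) (β := ℂ)] with x h1 h2
    simp only [Pi.mul_apply, Pi.zero_apply] at h1 h2 ⊢
    simp [h1, h2]

instance AEEqFunAlgebra : Algebra ℂ (α →ₘ[ν] ℂ) :=
  Algebra.ofModule
    (fun c f g => by
      apply AEEqFun.ext
      filter_upwards [AEEqFun.coeFn_mul (c • f) g, AEEqFun.coeFn_smul c f,
        AEEqFun.coeFn_smul c (f * g), AEEqFun.coeFn_mul f g] with x h1 h2 h3 h4
      simp only [Pi.mul_apply, Pi.smul_apply, smul_eq_mul] at h1 h2 h3 h4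
      simp [h1, h2, h3, h4]; ring)
    (fun c f g => by
      apply AEEqFun.ext
      filter_upwards [AEEqFun.coeFn_mul f (c • g), AEEqFun.coeFn_smul c g,
        AEEqFun.coeFn_smul c (f * g), AEEqFun.coeFn_mul f g] with x h1 h2 h3 h4
      simp only [Pi.mul_apply, Pi.smul_apply, smul_eq_mul] at h1 h2 h3 h4
      simp [h1, h2, h3, h4]; ring)

/-- `L^∞(X,μ)`: the Banach algebra of essentially bounded (equivalence classes of)
measurable functions `X → ℂ`, realised as a subalgebra of the algebra of all
a.e.-equivalence classes of functions, with pointwise operations. -/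
def Linfty (ν : MeasureTheory.Measure α) : Subalgebra ℂ (α →ₘ[ν] ℂ) where
  carrier := Lp ℂ ∞ ν
  mul_mem' {f g} hf hg := by
    have hf' : MemLp f ∞ ν := Lp.mem_Lp_iff_memLp.1 hf
    have hg' : MemLp g ∞ ν := Lp.mem_Lp_iff_memLp.1 hg
    refine Lp.mem_Lp_iff_memLp.2 (MemLp.ae_eq (AEEqFun.coeFn_mul f g).symm ?_)
    have : MemLp (⇑f • ⇑g) ∞ ν := hg'.smul hf'
    simpa [smul_eq_mul] using this
  one_mem' := by
    refine Lp.mem_Lp_iff_memLp.2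
      (MemLp.ae_eq (AEEqFun.coeFn_one (α := α) (μ := ν) (β := ℂ)).symm ?_)
    exact memLp_top_const 1
  add_mem' {f g} hf hg := (Lp ℂ ∞ ν).add_mem hf hg
  zero_mem' := (Lp ℂ ∞ ν).zero_mem
  algebraMap_mem' c := by
    have h1 : (1 : α →ₘ[ν] ℂ) ∈ Lp ℂ ∞ ν := by
      refine Lp.mem_Lp_iff_memLp.2
        (MemLp.ae_eq (AEEqFun.coeFn_one (α := α) (μ := ν) (β := ℂ)).symm ?_)
      exact memLp_top_const 1
    have heq : algebraMap ℂ (α →ₘ[ν] ℂ) c = c • (1 : α →ₘ[ν] ℂ) := by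
      rw [Algebra.algebraMap_eq_smul_one]
    rw [heq]
    refine Lp.mem_Lp_iff_memLp.2 (MemLp.ae_eq (AEEqFun.coeFn_smul c (1 : α →ₘ[ν] ℂ)).symm ?_)
    exact (Lp.mem_Lp_iff_memLp.1 h1).const_smul c

lemma mem_Linfty_iff {x : α →ₘ[ν] ℂ} : x ∈ Linfty ν ↔ x ∈ Lp ℂ ∞ ν := Iff.rfl

/-- `L²(X,μ)`: the Hilbert space of square-integrable (equivalence classes of) functions
`X → ℂ`, as a module over `L^∞(X,μ)`, the action being pointwise multiplication. -/
def L2 (ν : MeasureTheory.Measure α) : Submodule (Linfty ν) (α →ₘ[ν] ℂ) where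
  carrier := Lp ℂ 2 ν
  add_mem' {f g} hf hg := (Lp ℂ 2 ν).add_mem hf hg
  zero_mem' := (Lp ℂ 2 ν).zero_mem
  smul_mem' c f hf := by
    have hc : MemLp (⇑(c : α →ₘ[ν] ℂ)) ∞ ν := Lp.mem_Lp_iff_memLp.1 c.2
    have hf' : MemLp f 2 ν := Lp.mem_Lp_iff_memLp.1 hf
    have hsmul : c • f = (c : α →ₘ[ν] ℂ) * f := Algebra.smul_def c f
    rw [hsmul]
    refine Lp.mem_Lp_iff_memLp.2 (MemLp.ae_eq (AEEqFun.coeFn_mul _ f).symm ?_)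
    have : MemLp (⇑(c : α →ₘ[ν] ℂ) • ⇑f) 2 ν := hf'.smul hc
    simpa [smul_eq_mul] using this

instance : CommRing (Linfty ν) := inferInstance
instance : Module (Linfty ν) (α →ₘ[ν] ℂ) := inferInstance
instance : AddCommGroup (L2 ν) := inferInstance
instance : Module (Linfty ν) (L2 ν) := inferInstance


/-- Coercion of a finite sum of a.e.-equivalence classes is a.e. the pointwise sum. -/
lemma aeeq_coeFn_finsetSum {ι : Type*} (s : Finset ι) (g : ι → (α →ₘ[ν] ℂ)) :
    ⇑(∑ i ∈ s, g i) =ᵐ[ν] fun t => ∑ i ∈ s, g i t := by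
  classical
  induction s using Finset.induction with
  | empty =>
    simp only [Finset.sum_empty]
    exact AEEqFun.coeFn_zero (α := α) (μ := ν) (β := ℂ)
  | insert i s' h ih =>
    rw [Finset.sum_insert h]
    filter_upwards [AEEqFun.coeFn_add (g i) (∑ l ∈ s', g l), ih] with t h1 h2
    simp only [Pi.add_apply] at h1
    simp [h1, h2, Finset.sum_insert h]

/-- If `X` is a locally compact Hausdorff topological space and `μ` is a
positive Radon measure on `X`, then `L²(X,μ)` is a flat `L^∞(X,μ)`-module. -/
theorem L2_flat_over_Linfty
    {X : Type*} [TopologicalSpace X] [T2Space X] [LocallyCompactSpace X]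
    [MeasurableSpace X] [BorelSpace X]
    (μ : MeasureTheory.Measure X) [μ.Regular] :
    Module.Flat (Linfty μ) (L2 μ) := by
  classical
  rw [Module.Flat.iff_forall_isTrivialRelation]
  intro n f x hrel
  -- notation for a.e. representatives
  set F : (Fin n) → X → ℂ := fun i => ⇑((f i : X →ₘ[μ] ℂ)) with hFdef
  set Mx : (Fin n) → X → ℂ := fun i => ⇑((x i : X →ₘ[μ] ℂ)) with hMxdef
  have hFm : ∀ i, AEMeasurable (F i) μ := fun i => ((f i : X →ₘ[μ] ℂ)).aemeasurable
  have hMxm : ∀ i, AEMeasurable (Mx i) μ := fun i => ((x i : X →ₘ[μ] ℂ)).aemeasurable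
  -- the relation, as an identity of a.e.-equivalence classes
  have hsmul : ∀ (c : Linfty μ) (v : X →ₘ[μ] ℂ), c • v = (c : X →ₘ[μ] ℂ) * v :=
    fun c v => Algebra.smul_def c v
  have hv : (∑ i, ((f i : X →ₘ[μ] ℂ)) * ((x i : X →ₘ[μ] ℂ))) = 0 := by
    have h1 := congrArg (Subtype.val) hrel
    rw [Submodule.coe_sum] at h1
    simpa only [Submodule.coe_smul, Submodule.coe_zero, hsmul] using h1
  -- the relation holds a.e. pointwise
  have h0 : ∀ᵐ t ∂μ, ∑ i, F i t * Mx i t = 0 := by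
    have h1 := aeeq_coeFn_finsetSum (ν := μ) Finset.univ
      (fun i => ((f i : X →ₘ[μ] ℂ)) * ((x i : X →ₘ[μ] ℂ)))
    rw [hv] at h1
    have h2 : ∀ᵐ t ∂μ, ∀ i,
        (((f i : X →ₘ[μ] ℂ)) * ((x i : X →ₘ[μ] ℂ))) t = F i t * Mx i t :=
      ae_all_iff.2 fun i => AEEqFun.coeFn_mul _ _
    filter_upwards [h1.symm, h2, AEEqFun.coeFn_zero (α := X) (μ := μ) (β := ℂ)]
      with t ht1 ht2 ht3
    calc ∑ i, F i t * Mx i t = ∑ i, (((f i : X →ₘ[μ] ℂ)) * ((x i : X →ₘ[μ] ℂ))) t := by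
          exact Finset.sum_congr rfl fun i _ => (ht2 i).symm
      _ = (0 : X →ₘ[μ] ℂ) t := ht1
      _ = 0 := ht3
  -- the pointwise "norm squared" of the row vector F
  set s : X → ℝ := fun t => ∑ l, ‖F l t‖ ^ 2 with hsdef
  have hs_nonneg : ∀ t, 0 ≤ s t := fun t =>
    Finset.sum_nonneg fun l _ => sq_nonneg _
  have hs_le : ∀ i t, ‖F i t‖ ^ 2 ≤ s t := fun i t =>
    Finset.single_le_sum (fun l _ => sq_nonneg ‖F l t‖) (Finset.mem_univ i)
  have hs_zero : ∀ t, s t = 0 → ∀ i, F i t = 0 := by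
    intro t ht i
    have h1 : ‖F i t‖ ^ 2 ≤ 0 := ht ▸ hs_le i t
    have h2 : ‖F i t‖ = 0 := by nlinarith [norm_nonneg (F i t), sq_nonneg ‖F i t‖]
    exact norm_eq_zero.1 h2
  have hs_meas : AEMeasurable s μ := by
    apply Finset.aemeasurable_fun_sum
    intro l _
    exact ((hFm l).norm.pow aemeasurable_const)
  -- the projection matrix
  set A : (Fin n) → (Fin n) → X → ℂ := fun i j t =>
    (if i = j then (1 : ℂ) else 0) -
      (starRingEnd ℂ) (F i t) * F j t * ((s t : ℂ))⁻¹ with hAdef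
  have hA_meas : ∀ i j, AEMeasurable (A i j) μ := by
    intro i j
    apply AEMeasurable.sub aemeasurable_const
    exact ((Complex.continuous_conj.measurable.comp_aemeasurable (hFm i)).mul (hFm j)).mul
      ((Complex.continuous_ofReal.measurable.comp_aemeasurable hs_meas).inv)
  have hA_bound : ∀ i j t, ‖A i j t‖ ≤ 2 := by
    intro i j t
    have hδ : ‖(if i = j then (1 : ℂ) else 0)‖ ≤ 1 := by split <;> simp
    rcases eq_or_ne (s t) 0 with hst | hst
    · have hFi : F i t = 0 := hs_zero t hst i
      calc ‖A i j t‖ ≤ ‖(if i = j then (1 : ℂ) else 0)‖ +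
            ‖(starRingEnd ℂ) (F i t) * F j t * ((s t : ℂ))⁻¹‖ := norm_sub_le _ _
        _ ≤ 1 + 1 := by
            refine add_le_add hδ ?_
            simp [hFi]
        _ = 2 := by norm_num
    · have hspos : 0 < s t := lt_of_le_of_ne (hs_nonneg t) (Ne.symm hst)
      have hprod : ‖F i t‖ * ‖F j t‖ ≤ s t := by
        nlinarith [hs_le i t, hs_le j t, norm_nonneg (F i t), norm_nonneg (F j t),
          sq_nonneg (‖F i t‖ - ‖F j t‖)]
      calc ‖A i j t‖ ≤ ‖(if i = j then (1 : ℂ) else 0)‖ +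
            ‖(starRingEnd ℂ) (F i t) * F j t * ((s t : ℂ))⁻¹‖ := norm_sub_le _ _
        _ ≤ 1 + 1 := by
            refine add_le_add hδ ?_
            rw [norm_mul, norm_mul, norm_inv, RCLike.norm_conj]
            rw [Complex.norm_real, Real.norm_of_nonneg (hs_nonneg t)]
            rw [← div_eq_mul_inv, div_le_one hspos]
            exact hprod
        _ = 2 := by norm_num
  -- the matrix entries as elements of L^∞
  have hA_memℒp : ∀ i j, MemLp (A i j) ∞ μ := fun i j =>
    memLp_top_of_bound (hA_meas i j).aestronglyMeasurable 2 (ae_of_all _ (hA_bound i j))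
  set a : (Fin n) → (Fin n) → Linfty μ := fun i j =>
    ⟨AEEqFun.mk (A i j) (hA_meas i j).aestronglyMeasurable,
      Lp.mem_Lp_iff_memLp.2 ((hA_memℒp i j).ae_eq
        (AEEqFun.coeFn_mk (A i j) (hA_meas i j).aestronglyMeasurable).symm)⟩ with hadef
  have ha_ae : ∀ᵐ t ∂μ, ∀ i j, ((a i j : X →ₘ[μ] ℂ)) t = A i j t :=
    ae_all_iff.2 fun i => ae_all_iff.2 fun j =>
      AEEqFun.coeFn_mk (A i j) (hA_meas i j).aestronglyMeasurable
  have hFconj : ∀ i t, F i t * (starRingEnd ℂ) (F i t) = ((‖F i t‖ : ℂ)) ^ 2 := by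
    intro i t
    exact_mod_cast RCLike.mul_conj (F i t)
  refine ⟨n, a, x, ?_, ?_⟩
  · -- ∀ i, x i = ∑ j, a i j • x j
    intro i
    apply Subtype.ext
    have hc : ((∑ j, a i j • x j : L2 μ) : X →ₘ[μ] ℂ)
        = ∑ j, ((a i j : X →ₘ[μ] ℂ)) * ((x j : X →ₘ[μ] ℂ)) := by
      rw [Submodule.coe_sum]
      simp only [Submodule.coe_smul, hsmul]
    rw [hc]
    apply AEEqFun.ext
    have hmul : ∀ᵐ t ∂μ, ∀ j,
        (((a i j : X →ₘ[μ] ℂ)) * ((x j : X →ₘ[μ] ℂ))) t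
          = ((a i j : X →ₘ[μ] ℂ)) t * Mx j t :=
      ae_all_iff.2 fun j => AEEqFun.coeFn_mul _ _
    filter_upwards [h0, ha_ae, hmul,
      aeeq_coeFn_finsetSum (ν := μ) Finset.univ
        (fun j => ((a i j : X →ₘ[μ] ℂ)) * ((x j : X →ₘ[μ] ℂ)))]
      with t ht0 hta htm hts
    rw [hts]
    have expand : ∀ j, (((a i j : X →ₘ[μ] ℂ)) * ((x j : X →ₘ[μ] ℂ))) t
        = (if i = j then Mx j t else 0)
          - ((starRingEnd ℂ) (F i t) * ((s t : ℂ))⁻¹) * (F j t * Mx j t) := by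
      intro j
      rw [htm j, hta i j, hAdef]
      by_cases h : i = j <;> simp [h] <;> ring
    calc Mx i t = (∑ j, if i = j then Mx j t else 0)
          - ((starRingEnd ℂ) (F i t) * ((s t : ℂ))⁻¹) * ∑ j, F j t * Mx j t := by
          rw [ht0, mul_zero, sub_zero, Finset.sum_ite_eq]
          simp
      _ = ∑ j, ((if i = j then Mx j t else 0)
          - ((starRingEnd ℂ) (F i t) * ((s t : ℂ))⁻¹) * (F j t * Mx j t)) := by
          rw [Finset.sum_sub_distrib, Finset.mul_sum]
      _ = ∑ j, (((a i j : X →ₘ[μ] ℂ)) * ((x j : X →ₘ[μ] ℂ))) t := by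
          exact Finset.sum_congr rfl fun j _ => (expand j).symm
  · -- ∀ j, ∑ i, f i * a i j = 0
    intro j
    apply Subtype.ext
    have hc : ((∑ i, f i * a i j : Linfty μ) : X →ₘ[μ] ℂ)
        = ∑ i, ((f i : X →ₘ[μ] ℂ)) * ((a i j : X →ₘ[μ] ℂ)) := by
      push_cast
      rfl
    show ((∑ i, f i * a i j : Linfty μ) : X →ₘ[μ] ℂ) = (0 : X →ₘ[μ] ℂ)
    rw [hc]
    apply AEEqFun.ext
    have hmul : ∀ᵐ t ∂μ, ∀ i,
        (((f i : X →ₘ[μ] ℂ)) * ((a i j : X →ₘ[μ] ℂ))) t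
          = F i t * ((a i j : X →ₘ[μ] ℂ)) t :=
      ae_all_iff.2 fun i => AEEqFun.coeFn_mul _ _
    filter_upwards [ha_ae, hmul,
      aeeq_coeFn_finsetSum (ν := μ) Finset.univ
        (fun i => ((f i : X →ₘ[μ] ℂ)) * ((a i j : X →ₘ[μ] ℂ))),
      AEEqFun.coeFn_zero (α := X) (μ := μ) (β := ℂ)]
      with t hta htm hts htz
    rw [hts, htz]
    rcases eq_or_ne (s t) 0 with hst | hst
    · apply Finset.sum_eq_zero
      intro i _
      rw [htm i, hs_zero t hst i, zero_mul]
    · have hS : ((s t : ℂ)) ≠ 0 := by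
        exact_mod_cast hst
      have expand : ∀ i, (((f i : X →ₘ[μ] ℂ)) * ((a i j : X →ₘ[μ] ℂ))) t
          = (if i = j then F i t else 0)
            - (F i t * (starRingEnd ℂ) (F i t)) * (F j t * ((s t : ℂ))⁻¹) := by
        intro i
        rw [htm i, hta i j, hAdef]
        by_cases h : i = j <;> simp [h] <;> ring
      calc (∑ i, (((f i : X →ₘ[μ] ℂ)) * ((a i j : X →ₘ[μ] ℂ))) t)
          = (∑ i, if i = j then F i t else 0)
            - (∑ i, F i t * (starRingEnd ℂ) (F i t)) * (F j t * ((s t : ℂ))⁻¹) := by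
            rw [Finset.sum_mul, ← Finset.sum_sub_distrib]
            exact Finset.sum_congr rfl fun i _ => expand i
        _ = F j t - ((s t : ℂ)) * (F j t * ((s t : ℂ))⁻¹) := by
            congr 1
            · rw [Finset.sum_ite_eq']
              simp
            · congr 1
              rw [hsdef]
              push_cast
              exact Finset.sum_congr rfl fun i _ => hFconj i t
        _ = 0 := by
            field_simp
            simp
end
end

section
/- Every finitely generated ideal of L^∞(X,μ) is principal; that is, L^∞(X,μ) is a Bézout ring. -/
open MeasureTheory Filter Topology
open scoped ENNReal

set_option synthInstance.maxHeartbeats 1000000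
set_option maxHeartbeats 1000000

noncomputable section

variable {α : Type*} [MeasurableSpace α] {ν : MeasureTheory.Measure α}

namespace LinftyBezoutAux

/-- Build an element of `Linfty ν` from a function in `ℒ∞`. -/
def mkR (H : α → ℂ) (hH : MemLp H ∞ ν) : Linfty ν :=
  ⟨(hH.toLp H : α →ₘ[ν] ℂ), (hH.toLp H).2⟩

lemma coeFn_mkR (H : α → ℂ) (hH : MemLp H ∞ ν) :
    ⇑(((mkR H hH : Linfty ν) : α →ₘ[ν] ℂ)) =ᵐ[ν] H :=
  MemLp.coeFn_toLp hH

lemma memℒp_coe (f : Linfty ν) : MemLp ⇑((f : α →ₘ[ν] ℂ)) ∞ ν :=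
  Lp.mem_Lp_iff_memLp.1 f.2

lemma coe_mul (f g : Linfty ν) :
    ((f * g : Linfty ν) : α →ₘ[ν] ℂ) = (f : α →ₘ[ν] ℂ) * (g : α →ₘ[ν] ℂ) := rfl

lemma coe_add (f g : Linfty ν) :
    ((f + g : Linfty ν) : α →ₘ[ν] ℂ) = (f : α →ₘ[ν] ℂ) + (g : α →ₘ[ν] ℂ) := rfl

/-- The key two-generator step: any ideal generated by two elements of `L^∞` is principal. -/
lemma span_pair_principal (f g : Linfty ν) :
    ∃ h : Linfty ν, Ideal.span ({f, g} : Set (Linfty ν)) = Ideal.span {h} := by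
  classical
  set F : α → ℂ := ⇑((f : α →ₘ[ν] ℂ)) with hFdef
  set G : α → ℂ := ⇑((g : α →ₘ[ν] ℂ)) with hGdef
  have hF : MemLp F ∞ ν := memℒp_coe f
  have hG : MemLp G ∞ ν := memℒp_coe g
  set H : α → ℂ := fun x => ((‖F x‖ + ‖G x‖ : ℝ) : ℂ) with hHdef
  set A : α → ℂ := fun x => F x / H x with hAdef
  set B : α → ℂ := fun x => G x / H x with hBdef
  set U : α → ℂ := fun x => (starRingEnd ℂ) (F x) / ((‖F x‖ : ℝ) : ℂ) with hUdef
  set V : α → ℂ := fun x => (starRingEnd ℂ) (G x) / ((‖G x‖ : ℝ) : ℂ) with hVdef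
  -- pointwise identities
  have hnormH : ∀ x, ‖H x‖ = ‖F x‖ + ‖G x‖ := by
    intro x
    rw [hHdef]
    simp only [Complex.norm_real]
    exact abs_of_nonneg (by positivity)
  have hHzero : ∀ x, H x = 0 → F x = 0 ∧ G x = 0 := by
    intro x hx
    have h0 : ‖F x‖ + ‖G x‖ = 0 := by
      have := hnormH x
      rw [hx] at this
      simpa using this.symm
    constructor <;> [skip; skip] <;>
    · rw [← norm_eq_zero]
      nlinarith [norm_nonneg (F x), norm_nonneg (G x)]
  have hFA : ∀ x, F x = A x * H x := by
    intro x
    by_cases hx : H x = 0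
    · rw [hx, mul_zero, (hHzero x hx).1]
    · rw [hAdef]
      simp only
      rw [div_mul_cancel₀ _ hx]
  have hGB : ∀ x, G x = B x * H x := by
    intro x
    by_cases hx : H x = 0
    · rw [hx, mul_zero, (hHzero x hx).2]
    · rw [hBdef]
      simp only
      rw [div_mul_cancel₀ _ hx]
  have key : ∀ z : ℂ, (starRingEnd ℂ) z / ((‖z‖ : ℝ) : ℂ) * z = ((‖z‖ : ℝ) : ℂ) := by
    intro z
    by_cases hz : z = 0
    · simp [hz]
    · have hnz : ((‖z‖ : ℝ) : ℂ) ≠ 0 := by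
        simpa using norm_ne_zero_iff.2 hz
      rw [div_mul_eq_mul_div, mul_comm ((starRingEnd ℂ) z) z, Complex.mul_conj]
      rw [Complex.normSq_eq_norm_sq]
      rw [Complex.ofReal_pow, sq, mul_div_assoc, div_self hnz, mul_one]
  have hHUV : ∀ x, H x = U x * F x + V x * G x := by
    intro x
    rw [hUdef, hVdef, hHdef]
    simp only
    rw [key (F x), key (G x)]
    push_cast
    ring
  -- measurability
  have hFm : AEStronglyMeasurable F ν := hF.aestronglyMeasurable
  have hGm : AEStronglyMeasurable G ν := hG.aestronglyMeasurable
  have hHm : AEStronglyMeasurable H ν := by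
    have : AEStronglyMeasurable (fun x => ((‖F x‖ : ℝ) : ℂ)) ν :=
      Complex.continuous_ofReal.comp_aestronglyMeasurable hFm.norm
    have h2 : AEStronglyMeasurable (fun x => ((‖G x‖ : ℝ) : ℂ)) ν :=
      Complex.continuous_ofReal.comp_aestronglyMeasurable hGm.norm
    have := this.add h2
    refine this.congr (Eventually.of_forall fun x => ?_)
    simp [hHdef]
  have hAm : AEStronglyMeasurable A ν :=
    (hFm.aemeasurable.div hHm.aemeasurable).aestronglyMeasurable
  have hBm : AEStronglyMeasurable B ν :=
    (hGm.aemeasurable.div hHm.aemeasurable).aestronglyMeasurable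
  have hUm : AEStronglyMeasurable U ν := by
    refine AEMeasurable.aestronglyMeasurable (AEMeasurable.div ?_ ?_)
    · exact (Complex.continuous_conj.comp_aestronglyMeasurable hFm).aemeasurable
    · exact (Complex.continuous_ofReal.comp_aestronglyMeasurable hFm.norm).aemeasurable
  have hVm : AEStronglyMeasurable V ν := by
    refine AEMeasurable.aestronglyMeasurable (AEMeasurable.div ?_ ?_)
    · exact (Complex.continuous_conj.comp_aestronglyMeasurable hGm).aemeasurable
    · exact (Complex.continuous_ofReal.comp_aestronglyMeasurable hGm.norm).aemeasurable
  -- MemLp ∞ facts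
  have hHmem : MemLp H ∞ ν := by
    have h1 : MemLp (fun x => ((‖F x‖ : ℝ) : ℂ)) ∞ ν := by
      refine hF.of_le (Complex.continuous_ofReal.comp_aestronglyMeasurable hFm.norm) ?_
      refine Eventually.of_forall fun x => ?_
      simp [abs_of_nonneg (norm_nonneg (F x))]
    have h2 : MemLp (fun x => ((‖G x‖ : ℝ) : ℂ)) ∞ ν := by
      refine hG.of_le (Complex.continuous_ofReal.comp_aestronglyMeasurable hGm.norm) ?_
      refine Eventually.of_forall fun x => ?_
      simp [abs_of_nonneg (norm_nonneg (G x))]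
    have := h1.add h2
    refine this.ae_eq (Eventually.of_forall fun x => ?_)
    simp [hHdef]
  have hone : MemLp (fun _ : α => (1 : ℂ)) ∞ ν := memLp_top_const 1
  have hAbd : ∀ x, ‖A x‖ ≤ 1 := by
    intro x
    rw [hAdef]
    simp only [norm_div]
    refine div_le_one_of_le₀ ?_ (norm_nonneg _)
    rw [hnormH x]
    nlinarith [norm_nonneg (G x)]
  have hBbd : ∀ x, ‖B x‖ ≤ 1 := by
    intro x
    rw [hBdef]
    simp only [norm_div]
    refine div_le_one_of_le₀ ?_ (norm_nonneg _)
    rw [hnormH x]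
    nlinarith [norm_nonneg (F x)]
  have hUVbd : ∀ z : ℂ, ‖(starRingEnd ℂ) z / ((‖z‖ : ℝ) : ℂ)‖ ≤ 1 := by
    intro z
    rw [norm_div]
    by_cases hz : z = 0
    · simp [hz]
    · rw [RingHomIsometric.norm_map]
      have : ‖((‖z‖ : ℝ) : ℂ)‖ = ‖z‖ := by
        simp [abs_of_nonneg (norm_nonneg z)]
      rw [this, div_self (norm_ne_zero_iff.2 hz)]
  have hAmem : MemLp A ∞ ν :=
    hone.of_le hAm (Eventually.of_forall fun x => by simpa using hAbd x)
  have hBmem : MemLp B ∞ ν :=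
    hone.of_le hBm (Eventually.of_forall fun x => by simpa using hBbd x)
  have hUmem : MemLp U ∞ ν :=
    hone.of_le hUm (Eventually.of_forall fun x => by
      simpa only [norm_one] using hUVbd (F x))
  have hVmem : MemLp V ∞ ν :=
    hone.of_le hVm (Eventually.of_forall fun x => by
      simpa only [norm_one] using hUVbd (G x))
  -- elements of Linfty
  refine ⟨mkR H hHmem, ?_⟩
  set h : Linfty ν := mkR H hHmem with hhdef
  set a : Linfty ν := mkR A hAmem with hadef
  set b : Linfty ν := mkR B hBmem with hbdef
  set u : Linfty ν := mkR U hUmem with hudef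
  set v : Linfty ν := mkR V hVmem with hvdef
  -- ring identities in Linfty ν
  have hf_eq : f = a * h := by
    apply Subtype.ext
    rw [coe_mul]
    apply AEEqFun.ext
    filter_upwards [AEEqFun.coeFn_mul ((a : α →ₘ[ν] ℂ)) ((h : α →ₘ[ν] ℂ)),
      coeFn_mkR A hAmem, coeFn_mkR H hHmem] with x h1 h2 h3
    rw [h1]
    simp only [Pi.mul_apply]
    rw [h2, h3]
    exact hFA x
  have hg_eq : g = b * h := by
    apply Subtype.ext
    rw [coe_mul]
    apply AEEqFun.ext
    filter_upwards [AEEqFun.coeFn_mul ((b : α →ₘ[ν] ℂ)) ((h : α →ₘ[ν] ℂ)),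
      coeFn_mkR B hBmem, coeFn_mkR H hHmem] with x h1 h2 h3
    rw [h1]
    simp only [Pi.mul_apply]
    rw [h2, h3]
    exact hGB x
  have hh_eq : h = u * f + v * g := by
    apply Subtype.ext
    rw [coe_add, coe_mul, coe_mul]
    apply AEEqFun.ext
    filter_upwards [AEEqFun.coeFn_add ((u : α →ₘ[ν] ℂ) * (f : α →ₘ[ν] ℂ))
        ((v : α →ₘ[ν] ℂ) * (g : α →ₘ[ν] ℂ)),
      AEEqFun.coeFn_mul ((u : α →ₘ[ν] ℂ)) ((f : α →ₘ[ν] ℂ)),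
      AEEqFun.coeFn_mul ((v : α →ₘ[ν] ℂ)) ((g : α →ₘ[ν] ℂ)),
      coeFn_mkR U hUmem, coeFn_mkR V hVmem, coeFn_mkR H hHmem] with x h1 h2 h3 h4 h5 h6
    rw [h6, h1]
    simp only [Pi.add_apply, Pi.mul_apply] at h2 h3 ⊢
    rw [h2, h3, h4, h5]
    exact hHUV x
  -- span equality
  apply le_antisymm
  · rw [Ideal.span_le]
    rintro z (rfl | rfl)
    · rw [SetLike.mem_coe, Ideal.mem_span_singleton]
      exact ⟨a, by rw [hf_eq]; ring⟩
    · rw [SetLike.mem_coe, Ideal.mem_span_singleton]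
      exact ⟨b, by rw [hg_eq]; ring⟩
  · rw [Ideal.span_le, Set.singleton_subset_iff]
    rw [SetLike.mem_coe, Ideal.mem_span_pair]
    exact ⟨u, v, hh_eq.symm⟩

end LinftyBezoutAux

/-- Every finitely generated ideal of `L^∞(X,μ)` is principal; that is,
`L^∞(X,μ)` is a Bézout ring. -/
theorem Linfty_bezout
    {X : Type*} [TopologicalSpace X] [T2Space X] [LocallyCompactSpace X]
    [MeasurableSpace X] [BorelSpace X]
    (μ : MeasureTheory.Measure X) [μ.Regular]
    (I : Ideal (Linfty μ)) (hI : I.FG) :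
    I.IsPrincipal := by
  refine Submodule.fg_induction (motive := fun J _ => J.IsPrincipal)
    (fun x => ⟨⟨x, rfl⟩⟩) ?_ I hI
  intro J₁ J₂ _ _ h₁ h₂
  obtain ⟨x, rfl⟩ := h₁
  obtain ⟨y, rfl⟩ := h₂
  obtain ⟨z, hz⟩ := LinftyBezoutAux.span_pair_principal x y
  refine ⟨⟨z, ?_⟩⟩
  rw [← Submodule.span_union, Set.singleton_union]
  exact hz
end
end

section
/- Suppose μ is σ-finite. Then for every finitely generated, nonzero, proper ideal 𝔫 of L^∞(X,μ), the submodule 𝔫L²(X,μ) is strictly contained in L²(X,μ), i.e., 𝔫L²(X,μ) ⊊ L²(X,μ). -/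
open MeasureTheory Filter Topology
open scoped ENNReal

set_option synthInstance.maxHeartbeats 1000000
set_option maxHeartbeats 1000000

noncomputable section

variable {α : Type*} [MeasurableSpace α] {ν : MeasureTheory.Measure α}

section Aux

variable {α : Type*} [MeasurableSpace α] {ν : MeasureTheory.Measure α}

lemma coeFn_finset_sum {ι : Type*} (s : Finset ι) (f : ι → (α →ₘ[ν] ℂ)) :
    ⇑(∑ i ∈ s, f i) =ᵐ[ν] fun x => ∑ i ∈ s, f i x := by
  classical
  induction s using Finset.induction_on with
  | empty =>
      simp only [Finset.sum_empty]
      exact AEEqFun.coeFn_zero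
  | @insert a s ha ih =>
      simp only [Finset.sum_insert ha]
      filter_upwards [AEEqFun.coeFn_add (f a) (∑ i ∈ s, f i), ih] with x h1 h2
      simp only [Pi.add_apply] at h1
      simp [h1, h2]

lemma exists_ae_bound_of_memLinfty {f : α →ₘ[ν] ℂ} (hf : f ∈ Linfty ν) :
    ∃ C : ℝ, 0 ≤ C ∧ ∀ᵐ x ∂ν, ‖f x‖ ≤ C := by
  have hf' : MemLp f ∞ ν := Lp.mem_Lp_iff_memLp.1 hf
  refine ⟨(eLpNormEssSup (⇑f) ν).toReal, ENNReal.toReal_nonneg, ?_⟩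
  have hlt : eLpNormEssSup (⇑f) ν < ∞ := by
    have := hf'.2; rwa [eLpNorm_exponent_top] at this
  filter_upwards [enorm_ae_le_eLpNormEssSup (⇑f) ν] with x hx
  have := ENNReal.toReal_mono hlt.ne hx
  simpa using this

end Aux

set_option maxHeartbeats 10000000 in
/-- If `μ` is σ-finite, then for every finitely generated, nonzero, proper
ideal `𝔫` of `L^∞(X,μ)`, one has `𝔫·L²(X,μ) ⊊ L²(X,μ)`. -/
theorem smul_top_lt_top_of_fg_ne_bot_ne_top
    {X : Type*} [TopologicalSpace X] [T2Space X] [LocallyCompactSpace X]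
    [MeasurableSpace X] [BorelSpace X]
    (μ : MeasureTheory.Measure X) [μ.Regular] [SigmaFinite μ]
    (𝔫 : Ideal (Linfty μ)) (hfg : 𝔫.FG) (hne : 𝔫 ≠ ⊥) (hproper : 𝔫 ≠ ⊤) :
    𝔫 • (⊤ : Submodule (Linfty μ) (L2 μ)) < ⊤ := by
  classical
  rw [lt_top_iff_ne_top]
  intro htop
  obtain ⟨S, hS⟩ := hfg
  -- the weight function
  set w : X → ℝ := fun x => Real.sqrt (∑ f ∈ S, ‖(f : X →ₘ[μ] ℂ) x‖ ^ 2) with hw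
  have hw_nonneg : ∀ x, 0 ≤ w x := fun x => Real.sqrt_nonneg _
  have hw_meas : Measurable w := by
    apply Measurable.sqrt
    exact Finset.measurable_sum _ fun f _ =>
      ((f : X →ₘ[μ] ℂ).stronglyMeasurable.measurable.norm.pow_const 2)
  have hw_ge : ∀ f ∈ S, ∀ x : X, ‖(f : X →ₘ[μ] ℂ) x‖ ≤ w x := by
    intro f hf x
    apply Real.le_sqrt_of_sq_le
    exact Finset.single_le_sum (f := fun g : Linfty μ => ‖(g : X →ₘ[μ] ℂ) x‖ ^ 2)
      (fun g _ => sq_nonneg _) hf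
  -- a.e. upper bound for w
  have hbd : ∀ f ∈ S, ∃ C : ℝ, 0 ≤ C ∧ ∀ᵐ x ∂μ, ‖(f : X →ₘ[μ] ℂ) x‖ ≤ C :=
    fun f _ => exists_ae_bound_of_memLinfty f.2
  choose! B hB0 hBae using hbd
  have hCae : ∀ᵐ x ∂μ, ∀ f ∈ S, ‖(f : X →ₘ[μ] ℂ) x‖ ≤ B f := by
    simp only [← Finset.mem_coe]
    rw [eventually_all_finite S.finite_toSet]
    intro f hf
    exact hBae f (Finset.mem_coe.1 hf)
  set C : ℝ := Real.sqrt (∑ f ∈ S, (B f) ^ 2) with hCdef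
  have hC0 : 0 ≤ C := Real.sqrt_nonneg _
  have hwC : ∀ᵐ x ∂μ, w x ≤ C := by
    filter_upwards [hCae] with x hx
    apply Real.sqrt_le_sqrt
    exact Finset.sum_le_sum fun f hf => pow_le_pow_left₀ (norm_nonneg _) (hx f hf) 2
  -- multiplication by w preserves L²
  have hmulmem : ∀ h : X → ℂ, MemLp h 2 μ → MemLp (fun x => (w x : ℂ) * h x) 2 μ := by
    intro h hh
    refine MemLp.of_le (hh.const_smul (C : ℂ)) ?_ ?_
    · exact ((Complex.continuous_ofReal.measurable.comp hw_meas).aemeasurable.mul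
        hh.1.aemeasurable).aestronglyMeasurable
    · filter_upwards [hwC] with x hx
      have h1 : ‖(w x : ℂ) * h x‖ = w x * ‖h x‖ := by
        rw [norm_mul, Complex.norm_real, Real.norm_of_nonneg (hw_nonneg x)]
      have h2 : ‖((C : ℂ) • h) x‖ = C * ‖h x‖ := by
        simp [norm_smul, abs_of_nonneg hC0]
      rw [h1, h2]
      exact mul_le_mul_of_nonneg_right hx (norm_nonneg _)
  -- the multiplication operator T
  let Tfun : Lp ℂ 2 μ → Lp ℂ 2 μ := fun h => (hmulmem ⇑h (Lp.memLp h)).toLp _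
  have hT_coe : ∀ h : Lp ℂ 2 μ, ⇑(Tfun h) =ᵐ[μ] fun x => (w x : ℂ) * h x :=
    fun h => MemLp.coeFn_toLp _
  have hT_add : ∀ h g : Lp ℂ 2 μ, Tfun (h + g) = Tfun h + Tfun g := by
    intro h g
    apply Lp.ext
    filter_upwards [hT_coe (h + g), hT_coe h, hT_coe g, Lp.coeFn_add h g,
      Lp.coeFn_add (Tfun h) (Tfun g)] with x h1 h2 h3 h4 h5
    simp only [Pi.add_apply] at h4 h5
    rw [h1, h5, h2, h3, h4]
    ring
  have hT_smul : ∀ (c : ℂ) (h : Lp ℂ 2 μ), Tfun (c • h) = c • Tfun h := by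
    intro c h
    apply Lp.ext
    filter_upwards [hT_coe (c • h), hT_coe h, Lp.coeFn_smul c h,
      Lp.coeFn_smul c (Tfun h)] with x h1 h2 h3 h4
    simp only [Pi.smul_apply, smul_eq_mul] at h3 h4
    rw [h1, h4, h2, h3]
    ring
  let Tlin : Lp ℂ 2 μ →ₗ[ℂ] Lp ℂ 2 μ :=
    { toFun := Tfun, map_add' := hT_add, map_smul' := hT_smul }
  have hTbound : ∀ h : Lp ℂ 2 μ, ‖Tlin h‖ ≤ C * ‖h‖ := by
    intro h
    have h2 : eLpNorm (fun x => (w x : ℂ) * h x) 2 μ ≤ (‖(C : ℂ)‖₊ : ℝ≥0∞) * eLpNorm (⇑h) 2 μ := by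
      rw [← enorm_eq_nnnorm, ← eLpNorm_const_smul]
      apply eLpNorm_mono_ae
      filter_upwards [hwC] with x hx
      have ha : ‖(w x : ℂ) * h x‖ = w x * ‖h x‖ := by
        rw [norm_mul, Complex.norm_real, Real.norm_of_nonneg (hw_nonneg x)]
      have hb : ‖((C : ℂ) • ⇑h) x‖ = C * ‖h x‖ := by
        simp [norm_smul, abs_of_nonneg hC0]
      rw [ha, hb]
      exact mul_le_mul_of_nonneg_right hx (norm_nonneg _)
    have hTl : (Tlin h : Lp ℂ 2 μ) = Tfun h := rfl
    rw [hTl, Lp.norm_def, Lp.norm_def, eLpNorm_congr_ae (hT_coe h)]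
    calc (eLpNorm (fun x => (w x : ℂ) * h x) 2 μ).toReal
        ≤ ((‖(C : ℂ)‖₊ : ℝ≥0∞) * eLpNorm (⇑h) 2 μ).toReal := by
          apply ENNReal.toReal_mono _ h2
          exact ENNReal.mul_ne_top ENNReal.coe_ne_top (Lp.eLpNorm_ne_top h)
      _ = C * (eLpNorm (⇑h) 2 μ).toReal := by
          rw [ENNReal.toReal_mul, ENNReal.coe_toReal]
          congr 1
          simp [abs_of_nonneg hC0]
  let T : Lp ℂ 2 μ →L[ℂ] Lp ℂ 2 μ := Tlin.mkContinuous C hTbound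
  have hTfun_coe : ∀ h : Lp ℂ 2 μ, T h = Tfun h := fun _ => rfl
  -- the "divide by w" function
  set d : X → ℝ := fun x => if w x = 0 then 0 else (w x)⁻¹ with hd
  have hd_meas : Measurable d :=
    Measurable.ite (measurableSet_eq_fun hw_meas measurable_const) measurable_const hw_meas.inv
  have hd_nonneg : ∀ x, 0 ≤ d x := by
    intro x
    by_cases h0 : w x = 0 <;> simp [hd, h0, inv_nonneg.2 (hw_nonneg x)]
  -- surjectivity of T
  have hsurj : Function.Surjective T := by
    set R : Submodule (Linfty μ) (L2 μ) :=
      { carrier := {g | ∃ h : X → ℂ, MemLp h 2 μ ∧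
          ⇑(g : X →ₘ[μ] ℂ) =ᵐ[μ] fun x => (w x : ℂ) * h x}
        add_mem' := by
          rintro a b ⟨ha, hma, haae⟩ ⟨hb, hmb, hbae⟩
          refine ⟨ha + hb, hma.add hmb, ?_⟩
          have hcoe : ((a + b : L2 μ) : X →ₘ[μ] ℂ) = (a : X →ₘ[μ] ℂ) + (b : X →ₘ[μ] ℂ) := rfl
          rw [hcoe]
          filter_upwards [AEEqFun.coeFn_add (a : X →ₘ[μ] ℂ) (b : X →ₘ[μ] ℂ), haae, hbae]
            with x h1 h2 h3
          simp only [Pi.add_apply] at h1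
          rw [h1, h2, h3]
          simp only [Pi.add_apply]
          ring
        zero_mem' := by
          refine ⟨0, MemLp.zero, ?_⟩
          have hcoe : ((0 : L2 μ) : X →ₘ[μ] ℂ) = 0 := rfl
          rw [hcoe]
          filter_upwards [AEEqFun.coeFn_zero (α := X) (μ := μ) (β := ℂ)] with x h1
          simp [h1]
        smul_mem' := by
          rintro c g ⟨h, hm, hae⟩
          obtain ⟨Cc, hCc0, hCc⟩ := exists_ae_bound_of_memLinfty c.2
          refine ⟨fun x => (c : X →ₘ[μ] ℂ) x * h x, ?_, ?_⟩
          · refine MemLp.of_le (hm.const_smul (Cc : ℂ)) ?_ ?_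
            · exact ((c : X →ₘ[μ] ℂ).stronglyMeasurable.measurable.aemeasurable.mul
                hm.1.aemeasurable).aestronglyMeasurable
            · filter_upwards [hCc] with x hx
              have hb : ‖((Cc : ℂ) • h) x‖ = Cc * ‖h x‖ := by
                simp [norm_smul, abs_of_nonneg hCc0]
              rw [norm_mul, hb]
              exact mul_le_mul_of_nonneg_right hx (norm_nonneg _)
          · have hcoe : ((c • g : L2 μ) : X →ₘ[μ] ℂ) = (c : X →ₘ[μ] ℂ) * (g : X →ₘ[μ] ℂ) := rfl
            rw [hcoe]
            filter_upwards [AEEqFun.coeFn_mul (c : X →ₘ[μ] ℂ) (g : X →ₘ[μ] ℂ), hae]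
              with x h1 h2
            simp only [Pi.mul_apply] at h1
            rw [h1, h2]
            ring }
    have hRtop : R = ⊤ := by
      rw [← top_le_iff, ← htop, ← hS]
      refine Submodule.smul_le.2 ?_
      intro r hr m _
      refine Submodule.span_induction (p := fun r _ => r • m ∈ R) ?_ ?_ ?_ ?_ hr
      · intro f hfS
        have hfS' : f ∈ S := Finset.mem_coe.1 hfS
        refine ⟨fun x => (f : X →ₘ[μ] ℂ) x * (m : X →ₘ[μ] ℂ) x * (d x : ℂ), ?_, ?_⟩
        · have hmm : MemLp (⇑(m : X →ₘ[μ] ℂ)) 2 μ := Lp.mem_Lp_iff_memLp.1 m.2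
          refine MemLp.of_le hmm ?_ (Filter.Eventually.of_forall fun x => ?_)
          · exact (((f : X →ₘ[μ] ℂ).stronglyMeasurable.measurable.aemeasurable.mul
              (m : X →ₘ[μ] ℂ).stronglyMeasurable.measurable.aemeasurable).mul
              (Complex.continuous_ofReal.measurable.comp hd_meas).aemeasurable).aestronglyMeasurable
          · by_cases h0 : w x = 0
            · simp [hd, h0]
            · have hfx := hw_ge f hfS' x
              have hwpos : 0 < w x := lt_of_le_of_ne (hw_nonneg x) (Ne.symm h0)
              have hdx : d x = (w x)⁻¹ := by simp [hd, h0]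
              rw [norm_mul, norm_mul, Complex.norm_real, hdx,
                Real.norm_of_nonneg (inv_nonneg.2 (hw_nonneg x))]
              calc ‖(f : X →ₘ[μ] ℂ) x‖ * ‖(m : X →ₘ[μ] ℂ) x‖ * (w x)⁻¹
                  ≤ w x * ‖(m : X →ₘ[μ] ℂ) x‖ * (w x)⁻¹ := by
                    apply mul_le_mul_of_nonneg_right _ (inv_nonneg.2 (hw_nonneg x))
                    exact mul_le_mul_of_nonneg_right hfx (norm_nonneg _)
                _ = ‖(m : X →ₘ[μ] ℂ) x‖ := by field_simp
        · have hcoe : ((f • m : L2 μ) : X →ₘ[μ] ℂ) = (f : X →ₘ[μ] ℂ) * (m : X →ₘ[μ] ℂ) := rfl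
          rw [hcoe]
          filter_upwards [AEEqFun.coeFn_mul (f : X →ₘ[μ] ℂ) (m : X →ₘ[μ] ℂ)] with x h1
          simp only [Pi.mul_apply] at h1
          rw [h1]
          by_cases h0 : w x = 0
          · have hfx : ‖(f : X →ₘ[μ] ℂ) x‖ = 0 :=
              le_antisymm (h0 ▸ hw_ge f hfS' x) (norm_nonneg _)
            rw [norm_eq_zero] at hfx
            simp [hfx]
          · have hdx : d x = (w x)⁻¹ := by simp [hd, h0]
            rw [hdx]
            have hwc : (w x : ℂ) ≠ 0 := by exact_mod_cast h0
            push_cast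
            field_simp
      · simpa [zero_smul] using R.zero_mem
      · intro a b _ _ hpa hpb
        rw [add_smul]
        exact R.add_mem hpa hpb
      · intro a x _ hpx
        rw [smul_eq_mul, mul_smul]
        exact R.smul_mem a hpx
    intro g
    have hg2 : (⟨(g : X →ₘ[μ] ℂ), g.2⟩ : L2 μ) ∈ R := by rw [hRtop]; trivial
    obtain ⟨h, hm, hae⟩ := hg2
    refine ⟨hm.toLp h, ?_⟩
    rw [hTfun_coe]
    apply Lp.ext
    filter_upwards [hT_coe (hm.toLp h), hm.coeFn_toLp, hae] with x h1 h2 h3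
    rw [h1, h2]
    exact h3.symm
  -- open mapping theorem
  obtain ⟨C', hC'pos, hC'⟩ := ContinuousLinearMap.exists_preimage_norm_le T hsurj
  set ε : ℝ := (C' + 1)⁻¹ with hε
  have hεpos : 0 < ε := by positivity
  set A : Set X := {x | w x < ε} with hA
  have hAmeas : MeasurableSet A := measurableSet_lt hw_meas measurable_const
  -- A has positive measure, else 𝔫 = ⊤
  have hApos : 0 < μ A := by
    rcases eq_or_ne (μ A) 0 with hA0 | hA0
    swap
    · exact pos_iff_ne_zero.2 hA0
    exfalso
    have hwge : ∀ᵐ x ∂μ, ε ≤ w x := by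
      rw [ae_iff]
      have he : {x | ¬ ε ≤ w x} = A := by ext x; simp [hA, not_le]
      rwa [he]
    apply hproper
    rw [Ideal.eq_top_iff_one, ← hS]
    set φ : Linfty μ → X → ℂ :=
      fun f x => star ((f : X →ₘ[μ] ℂ) x) * ((d x : ℂ)) ^ 2 with hφ
    have hφmeas : ∀ f : Linfty μ, AEStronglyMeasurable (φ f) μ := fun f =>
      (((continuous_star.measurable.comp (f : X →ₘ[μ] ℂ).stronglyMeasurable.measurable)).aemeasurable.mul
        (((Complex.continuous_ofReal.measurable.comp hd_meas).pow_const 2).aemeasurable)).aestronglyMeasurable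
    have hφmem : ∀ f : Linfty μ, MemLp (φ f) ∞ μ := by
      intro f
      obtain ⟨Cf, hCf0, hCfae⟩ := exists_ae_bound_of_memLinfty f.2
      refine memLp_top_of_bound (hφmeas f) (Cf * (ε⁻¹) ^ 2) ?_
      filter_upwards [hCfae, hwge] with x h1 h2
      have hwpos : 0 < w x := lt_of_lt_of_le hεpos h2
      have hdx : d x = (w x)⁻¹ := by simp [hd, ne_of_gt hwpos]
      have hn : ‖φ f x‖ = ‖(f : X →ₘ[μ] ℂ) x‖ * (d x) ^ 2 := by
        rw [hφ]
        simp only [norm_mul, norm_star, norm_pow, Complex.norm_real,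
          Real.norm_of_nonneg (hd_nonneg x)]
      rw [hn, hdx]
      have hinv : (w x)⁻¹ ≤ ε⁻¹ := inv_anti₀ hεpos h2
      have hsq : ((w x)⁻¹) ^ 2 ≤ (ε⁻¹) ^ 2 :=
        pow_le_pow_left₀ (inv_nonneg.2 (hw_nonneg x)) hinv 2
      exact mul_le_mul h1 hsq (sq_nonneg _) hCf0
    have hcfmem : ∀ f : Linfty μ, AEEqFun.mk (φ f) (hφmeas f) ∈ Linfty μ := by
      intro f
      rw [mem_Linfty_iff, Lp.mem_Lp_iff_memLp]
      exact MemLp.ae_eq (AEEqFun.coeFn_mk (φ f) (hφmeas f)).symm (hφmem f)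
    set cf : Linfty μ → Linfty μ := fun f => ⟨AEEqFun.mk (φ f) (hφmeas f), hcfmem f⟩
      with hcfdef
    have h1eq : (1 : Linfty μ) = ∑ f ∈ S, cf f * f := by
      apply Subtype.ext
      have hcoe : ((∑ f ∈ S, cf f * f : Linfty μ) : X →ₘ[μ] ℂ)
          = ∑ f ∈ S, ((cf f : X →ₘ[μ] ℂ) * (f : X →ₘ[μ] ℂ)) := by
        rw [show ((∑ f ∈ S, cf f * f : Linfty μ) : X →ₘ[μ] ℂ)
          = (Linfty μ).val (∑ f ∈ S, cf f * f) from rfl, map_sum]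
        rfl
      rw [hcoe]
      have hone : ((1 : Linfty μ) : X →ₘ[μ] ℂ) = 1 := rfl
      rw [hone]
      apply AEEqFun.ext
      have hmuls : ∀ᵐ x ∂μ, ∀ f ∈ (S : Set (Linfty μ)),
          ((cf f : X →ₘ[μ] ℂ) * (f : X →ₘ[μ] ℂ)) x = φ f x * (f : X →ₘ[μ] ℂ) x := by
        rw [eventually_all_finite S.finite_toSet]
        intro f _
        filter_upwards [AEEqFun.coeFn_mul (cf f : X →ₘ[μ] ℂ) (f : X →ₘ[μ] ℂ),
          AEEqFun.coeFn_mk (φ f) (hφmeas f)] with x h1 h2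
        rw [h1]
        simp only [Pi.mul_apply]
        rw [h2]
      filter_upwards [coeFn_finset_sum S (fun f => (cf f : X →ₘ[μ] ℂ) * (f : X →ₘ[μ] ℂ)),
        hmuls, hwge, AEEqFun.coeFn_one (α := X) (μ := μ) (β := ℂ)] with x h1 h2 h3 h4
      rw [h4, h1, Finset.sum_congr rfl (fun f hf => h2 f (Finset.mem_coe.2 hf))]
      have hwpos : 0 < w x := lt_of_lt_of_le hεpos h3
      have hdx : d x = (w x)⁻¹ := by simp [hd, ne_of_gt hwpos]
      have hwx : w x = Real.sqrt (∑ f ∈ S, ‖(f : X →ₘ[μ] ℂ) x‖ ^ 2) := by rw [hw]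
      have hsum : ∑ f ∈ S, ‖(f : X →ₘ[μ] ℂ) x‖ ^ 2 = w x ^ 2 := by
        rw [hwx]
        exact (Real.sq_sqrt (Finset.sum_nonneg fun f _ => sq_nonneg _)).symm
      have hterm : ∀ f ∈ S, φ f x * (f : X →ₘ[μ] ℂ) x
          = ((d x : ℂ)) ^ 2 * ((‖(f : X →ₘ[μ] ℂ) x‖ : ℂ)) ^ 2 := by
        intro f _
        rw [hφ]
        calc star ((f : X →ₘ[μ] ℂ) x) * ((d x : ℂ)) ^ 2 * (f : X →ₘ[μ] ℂ) x
            = ((d x : ℂ)) ^ 2 * ((f : X →ₘ[μ] ℂ) x * star ((f : X →ₘ[μ] ℂ) x)) := by ring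
          _ = ((d x : ℂ)) ^ 2 * ((‖(f : X →ₘ[μ] ℂ) x‖ : ℂ)) ^ 2 := by
              rw [RCLike.star_def, Complex.mul_conj']
      rw [Finset.sum_congr rfl hterm, ← Finset.mul_sum]
      have hcast : ∑ f ∈ S, ((‖(f : X →ₘ[μ] ℂ) x‖ : ℂ)) ^ 2 = ((w x : ℂ)) ^ 2 := by
        rw [show ((w x : ℂ)) ^ 2 = (((w x ^ 2 : ℝ)) : ℂ) by push_cast; ring, ← hsum]
        push_cast
        ring
      rw [hcast, hdx]
      have hwc : (w x : ℂ) ≠ 0 := by exact_mod_cast ne_of_gt hwpos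
      push_cast
      field_simp
      rfl
    rw [h1eq]
    exact Ideal.sum_mem _ fun f hf => Ideal.mul_mem_left _ _ (Ideal.subset_span hf)
  -- pick a subset of finite positive measure
  obtain ⟨t, htm, hts, ht0, htfin⟩ :=
    MeasureTheory.Measure.exists_subset_measure_lt_top hAmeas hApos
  have hgmem : MemLp (t.indicator fun _ => (1 : ℂ)) 2 μ :=
    memLp_indicator_const 2 htm 1 (Or.inr htfin.ne)
  obtain ⟨h, hTh, hnorm⟩ := hC' (hgmem.toLp _)
  have hgnorm_e : eLpNorm (t.indicator fun _ => (1 : ℂ)) 2 μ = (μ t) ^ (1/2 : ℝ) := by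
    rw [eLpNorm_indicator_const htm two_ne_zero ENNReal.ofNat_ne_top]
    norm_num
  have hgpos : 0 < ‖hgmem.toLp _‖ := by
    rw [Lp.norm_toLp, hgnorm_e]
    refine ENNReal.toReal_pos ?_ ?_
    · exact (ENNReal.rpow_pos ht0 htfin.ne).ne'
    · exact ENNReal.rpow_ne_top_of_nonneg (by norm_num) htfin.ne
  -- a.e. lower bound for h on t
  have hhl : ∀ᵐ x ∂μ, x ∈ t → ε⁻¹ ≤ ‖h x‖ := by
    have hkey : (fun x => (w x : ℂ) * h x) =ᵐ[μ] t.indicator fun _ => (1 : ℂ) := by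
      have e1 : ⇑(Tfun h) =ᵐ[μ] fun x => (w x : ℂ) * h x := hT_coe h
      have e2 : ⇑(Tfun h) =ᵐ[μ] t.indicator fun _ => (1 : ℂ) := by
        rw [← hTfun_coe h, hTh]
        exact hgmem.coeFn_toLp
      exact e1.symm.trans e2
    filter_upwards [hkey] with x hx hxt
    rw [Set.indicator_of_mem hxt] at hx
    have hwlt : w x < ε := hts hxt
    have hnz : w x ≠ 0 := by
      intro h0
      rw [h0] at hx
      simp at hx
    have hxnorm : w x * ‖h x‖ = 1 := by
      have := congrArg norm hx
      rwa [norm_mul, Complex.norm_real, Real.norm_of_nonneg (hw_nonneg x), norm_one] at this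
    have hhx : ‖h x‖ = (w x)⁻¹ := by
      rw [mul_comm] at hxnorm
      exact eq_inv_of_mul_eq_one_left hxnorm
    rw [hhx]
    have hwpos : 0 < w x := lt_of_le_of_ne (hw_nonneg x) (Ne.symm hnz)
    exact inv_anti₀ hwpos (le_of_lt hwlt)
  -- eLpNorm lower bound
  have hlow : eLpNorm (t.indicator fun _ => ((ε⁻¹ : ℝ) : ℂ)) 2 μ ≤ eLpNorm (⇑h) 2 μ := by
    apply eLpNorm_mono_ae
    filter_upwards [hhl] with x hx
    by_cases hxt : x ∈ t
    · rw [Set.indicator_of_mem hxt, Complex.norm_real,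
        Real.norm_of_nonneg (le_of_lt (inv_pos.2 hεpos))]
      exact hx hxt
    · rw [Set.indicator_of_notMem hxt]
      simp
  have hlow' : ε⁻¹ * ‖hgmem.toLp _‖ ≤ ‖h‖ := by
    have h2 := ENNReal.toReal_mono (Lp.eLpNorm_ne_top h) hlow
    rw [eLpNorm_indicator_const htm two_ne_zero ENNReal.ofNat_ne_top,
      ENNReal.toReal_mul, enorm_eq_nnnorm, ENNReal.coe_toReal] at h2
    rw [Lp.norm_def h, Lp.norm_toLp, hgnorm_e]
    have hexp : 1 / (2 : ℝ≥0∞).toReal = (1/2 : ℝ) := by norm_num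
    rw [hexp] at h2
    have hnn : (‖((ε⁻¹ : ℝ) : ℂ)‖₊ : ℝ) = ε⁻¹ := by
      rw [coe_nnnorm, Complex.norm_real, Real.norm_of_nonneg (le_of_lt (inv_pos.2 hεpos))]
    rw [hnn] at h2
    exact h2
  have hfin : ε⁻¹ ≤ C' := by
    have hcomb := hlow'.trans hnorm
    exact le_of_mul_le_mul_right hcomb hgpos
  rw [hε, inv_inv] at hfin
  linarith
end
end

section
/- Suppose μ is σ-finite and g ∈ L^∞(X,μ) satisfies g·L²(X,μ) = L²(X,μ), i.e., every element of L²(X,μ) can be written as g·h for some h ∈ L²(X,μ). Then g is invertible in L^∞(X,μ), i.e., there exists g⁻¹ ∈ L^∞(X,μ) with g·g⁻¹ = 1 almost everywhere. -/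
open MeasureTheory Filter Topology
open scoped ENNReal

set_option synthInstance.maxHeartbeats 1000000
set_option maxHeartbeats 1000000

noncomputable section

variable {α : Type*} [MeasurableSpace α] {ν : MeasureTheory.Measure α}

/-- Suppose `μ` is σ-finite and `g ∈ L^∞(X,μ)` is such that every element
of `L²(X,μ)` can be written as `g·h` for some `h ∈ L²(X,μ)`. Then `g` is invertible in
`L^∞(X,μ)`. -/
theorem isUnit_of_smul_surjective
    {X : Type*} [TopologicalSpace X] [T2Space X] [LocallyCompactSpace X]
    [MeasurableSpace X] [BorelSpace X]
    (μ : MeasureTheory.Measure X) [μ.Regular] [SigmaFinite μ]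
    (g : Linfty μ)
    (hsurj : ∀ f : L2 μ, ∃ h : L2 μ, f = g • h) :
    ∃ ginv : Linfty μ, g * ginv = 1 := by
    classical
  set Gae : X →ₘ[μ] ℂ := (g : X →ₘ[μ] ℂ) with hGaedef
  have hgmem : MemLp (⇑Gae) ∞ μ := Lp.mem_Lp_iff_memLp.1 g.2
  -- the multiplication operator on L²
  have hmemT : ∀ h : Lp ℂ 2 μ, (Gae * (h : X →ₘ[μ] ℂ)) ∈ Lp ℂ 2 μ := by
    intro h
    have h2 := (L2 μ).smul_mem g (h.2 : (h : X →ₘ[μ] ℂ) ∈ L2 μ)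
    rwa [Algebra.smul_def] at h2
  let Tlin : Lp ℂ 2 μ →ₗ[ℂ] Lp ℂ 2 μ :=
    { toFun := fun h => ⟨Gae * (h : X →ₘ[μ] ℂ), hmemT h⟩
      map_add' := fun a b => Subtype.ext (by
        show Gae * ((a : X →ₘ[μ] ℂ) + (b : X →ₘ[μ] ℂ)) = Gae * a + Gae * b
        ring)
      map_smul' := fun c a => Subtype.ext (by
        show Gae * (c • (a : X →ₘ[μ] ℂ)) = c • (Gae * (a : X →ₘ[μ] ℂ))
        rw [mul_smul_comm]) }
  have hTbound : ∀ h : Lp ℂ 2 μ, ‖Tlin h‖ ≤ (eLpNorm (⇑Gae) ∞ μ).toReal * ‖h‖ := by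
    intro h
    rw [Lp.norm_def, Lp.norm_def]
    have h1 : eLpNorm (⇑(Tlin h : Lp ℂ 2 μ)) 2 μ = eLpNorm (⇑Gae • ⇑h) 2 μ := by
      apply eLpNorm_congr_ae
      filter_upwards [AEEqFun.coeFn_mul Gae ((h : Lp ℂ 2 μ) : X →ₘ[μ] ℂ)] with x hx
      exact hx
    have h2 := eLpNorm_smul_le_eLpNorm_top_mul_eLpNorm (μ := μ) 2 (Lp.aestronglyMeasurable h) (⇑Gae)
    calc (eLpNorm (⇑(Tlin h : Lp ℂ 2 μ)) 2 μ).toReal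
        = (eLpNorm (⇑Gae • ⇑h) 2 μ).toReal := by rw [h1]
      _ ≤ ((eLpNorm (⇑Gae) ∞ μ) * eLpNorm (⇑h) 2 μ).toReal :=
          ENNReal.toReal_mono (ENNReal.mul_ne_top hgmem.2.ne (Lp.eLpNorm_ne_top h)) h2
      _ = (eLpNorm (⇑Gae) ∞ μ).toReal * (eLpNorm (⇑h) 2 μ).toReal := ENNReal.toReal_mul
  let T : Lp ℂ 2 μ →L[ℂ] Lp ℂ 2 μ := Tlin.mkContinuous _ hTbound
  have hTval : ∀ h : Lp ℂ 2 μ, (T h : X →ₘ[μ] ℂ) = Gae * (h : X →ₘ[μ] ℂ) := fun h => rfl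
  have Tsurj : Function.Surjective T := by
    intro f
    obtain ⟨h, hf⟩ := hsurj ⟨(f : X →ₘ[μ] ℂ), f.2⟩
    refine ⟨⟨(h : X →ₘ[μ] ℂ), h.2⟩, ?_⟩
    apply Subtype.ext
    have h3 := congrArg (Subtype.val) hf
    simp only [Submodule.coe_smul] at h3
    rw [Algebra.smul_def] at h3
    exact (hTval _).trans h3.symm
  obtain ⟨C, hC0, hC⟩ := T.exists_preimage_norm_le Tsurj
  -- a strongly measurable representative
  set G₀ : X → ℂ := (Gae.aestronglyMeasurable).mk ⇑Gae with hG₀def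
  have hGeq : ⇑Gae =ᵐ[μ] G₀ := Gae.aestronglyMeasurable.ae_eq_mk
  have hG₀m : StronglyMeasurable G₀ := Gae.aestronglyMeasurable.stronglyMeasurable_mk
  set ε : ℝ := (2*C)⁻¹ with hεdef
  have hεpos : 0 < ε := by positivity
  have hA : μ {a | ‖G₀ a‖ < ε} = 0 := by
    by_contra hA0
    have hAmeas : MeasurableSet {a | ‖G₀ a‖ < ε} :=
      measurableSet_lt hG₀m.norm.measurable measurable_const
    obtain ⟨B, hBm, hBsub, hB0, hBtop⟩ :=
      MeasureTheory.Measure.exists_subset_measure_lt_top hAmeas (pos_iff_ne_zero.2 hA0)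
    have hfmem : MemLp (B.indicator fun _ => (1:ℂ)) 2 μ :=
      memLp_indicator_const 2 hBm 1 (Or.inr hBtop.ne)
    set fLp : Lp ℂ 2 μ := hfmem.toLp _ with hfLpdef
    obtain ⟨x, hx, hxnorm⟩ := hC fLp
    set t : ℝ := (μ B ^ ((2:ℝ)⁻¹)).toReal with htdef
    have hfnorm : ‖fLp‖ = t := by
      rw [Lp.norm_toLp, eLpNorm_indicator_const hBm two_ne_zero ENNReal.ofNat_ne_top]
      simp [htdef]
    have hae : ∀ᵐ a ∂μ, Gae a * x a = B.indicator (fun _ => (1:ℂ)) a := by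
      have h2 : ⇑(T x) =ᵐ[μ] B.indicator fun _ => (1:ℂ) := by
        rw [hx]; exact MemLp.coeFn_toLp hfmem
      have h4 : ⇑(T x) =ᵐ[μ] ⇑Gae * ⇑x := by
        have h5 : (⇑(T x) : X → ℂ) = ⇑(Gae * (x : X →ₘ[μ] ℂ)) := by rw [hTval]
        rw [h5]; exact AEEqFun.coeFn_mul _ _
      filter_upwards [h2, h4] with a ha hb
      rw [← ha, hb]; rfl
    have hxa : ∀ᵐ a ∂μ, a ∈ B → 2*C ≤ ‖x a‖ := by
      filter_upwards [hae, hGeq] with a ha hGa haB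
      have hind : B.indicator (fun _ => (1:ℂ)) a = 1 := Set.indicator_of_mem haB _
      have h1 : Gae a * x a = 1 := by rw [ha, hind]
      have hGne : Gae a ≠ 0 := left_ne_zero_of_mul (h1 ▸ one_ne_zero)
      have hGpos : 0 < ‖Gae a‖ := norm_pos_iff.2 hGne
      have hnorm1 : ‖Gae a‖ * ‖x a‖ = 1 := by rw [← norm_mul, h1, norm_one]
      have hxval : ‖x a‖ = (‖Gae a‖)⁻¹ := (inv_eq_of_mul_eq_one_right hnorm1).symm
      have hlt : ‖Gae a‖ ≤ (2*C)⁻¹ := by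
        rw [hGa]; exact (hBsub haB).le
      rw [hxval]
      calc 2*C = ((2*C)⁻¹)⁻¹ := by rw [inv_inv]
        _ ≤ (‖Gae a‖)⁻¹ := inv_anti₀ hGpos hlt
    have hrestrict : μ.restrict B ≠ 0 := by
      rw [Ne, Measure.restrict_eq_zero]; exact hB0.ne'
    have h3 : eLpNorm (fun _ : X => (2*C:ℝ)) 2 (μ.restrict B) ≤ eLpNorm (⇑x) 2 (μ.restrict B) := by
      apply eLpNorm_mono_ae
      filter_upwards [hxa.filter_mono (ae_mono Measure.restrict_le_self),
        self_mem_ae_restrict hBm] with a ha haB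
      rw [Real.norm_eq_abs, abs_of_pos (by positivity)]
      exact ha haB
    have h4 : eLpNorm (⇑x) 2 (μ.restrict B) ≤ eLpNorm (⇑x) 2 μ :=
      eLpNorm_mono_measure _ Measure.restrict_le_self
    have h5 : eLpNorm (fun _ : X => (2*C:ℝ)) 2 (μ.restrict B)
        = (‖(2*C:ℝ)‖₊ : ℝ≥0∞) * (μ B) ^ ((2:ℝ)⁻¹) := by
      rw [eLpNorm_const _ two_ne_zero hrestrict, Measure.restrict_apply_univ]
      norm_num [enorm_eq_nnnorm]
    have hfin : eLpNorm (⇑x) 2 μ ≠ ∞ := Lp.eLpNorm_ne_top x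
    have htpos : 0 < t := by
      rw [htdef]
      apply ENNReal.toReal_pos
      · exact (ENNReal.rpow_pos hB0 hBtop.ne).ne'
      · exact (ENNReal.rpow_lt_top_of_nonneg (by norm_num) hBtop.ne).ne
    have hlow2 : 2*C*t ≤ ‖x‖ := by
      rw [Lp.norm_def]
      have h6 := (h3.trans h4)
      rw [h5] at h6
      calc 2*C*t = ((‖(2*C:ℝ)‖₊ : ℝ≥0∞) * (μ B) ^ ((2:ℝ)⁻¹)).toReal := by
            rw [ENNReal.toReal_mul, ENNReal.coe_toReal, coe_nnnorm, Real.norm_eq_abs,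
              abs_of_pos (by positivity), htdef]
        _ ≤ _ := ENNReal.toReal_mono hfin h6
    rw [hfnorm] at hxnorm
    nlinarith [hlow2, hxnorm, htpos, hC0]
  -- from the essential lower bound, construct the inverse
  have haeG : ∀ᵐ a ∂μ, ε ≤ ‖G₀ a‖ := by
    rw [ae_iff]
    convert hA using 2
    ext a
    simp [not_le]
  have hinvm : StronglyMeasurable (fun a => (G₀ a)⁻¹) :=
    hG₀m.measurable.inv.stronglyMeasurable
  have hinvbound : MemLp (fun a => (G₀ a)⁻¹) ∞ μ := by
    apply memLp_top_of_bound hinvm.aestronglyMeasurable ε⁻¹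
    filter_upwards [haeG] with a ha
    rw [norm_inv]
    exact inv_anti₀ hεpos ha
  refine ⟨⟨AEEqFun.mk (fun a => (G₀ a)⁻¹) hinvm.aestronglyMeasurable,
      Lp.mem_Lp_iff_memLp.2 (MemLp.ae_eq (AEEqFun.coeFn_mk _ _).symm hinvbound)⟩, ?_⟩
  apply Subtype.ext
  show Gae * AEEqFun.mk (fun a => (G₀ a)⁻¹) hinvm.aestronglyMeasurable = 1
  apply AEEqFun.ext
  filter_upwards [AEEqFun.coeFn_mul Gae (AEEqFun.mk (fun a => (G₀ a)⁻¹) hinvm.aestronglyMeasurable),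
    AEEqFun.coeFn_mk (fun a => (G₀ a)⁻¹) hinvm.aestronglyMeasurable,
    AEEqFun.coeFn_one (α := X) (μ := μ) (β := ℂ), hGeq, haeG] with a h1 h2 h3 h4 h5
  rw [h1, h3]
  show Gae a * (AEEqFun.mk (fun a => (G₀ a)⁻¹) hinvm.aestronglyMeasurable) a = 1
  rw [h2, h4]
  apply mul_inv_cancel₀
  intro h0
  rw [h0] at h5
  simp at h5
  linarith
end
end

section
/- Assume the exhaustion hypothesis on (X,μ). Then L²(X,μ) is not a faithfully flat L^∞(X,μ)-module. -/
open MeasureTheory Filter Topology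
open scoped ENNReal

set_option synthInstance.maxHeartbeats 1000000
set_option maxHeartbeats 1000000

noncomputable section

variable {α : Type*} [MeasurableSpace α] {ν : MeasureTheory.Measure α}

lemma aux_weights {a : ℕ → ℝ} (ha0 : ∀ n, 0 ≤ a n) (ha : Summable a) :
    ∃ c : ℕ → ℝ, (∀ n, 0 < c n) ∧ Antitone c ∧ Tendsto c atTop (𝓝 0) ∧
      Summable (fun n => a n / c n ^ 2) := by
  set t : ℕ → ℝ := fun n => ∑' k, a (k + n) with ht_def
  have hsum_n : ∀ n, Summable fun k => a (k + n) := fun n => (summable_nat_add_iff n).2 ha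
  have ht_nonneg : ∀ n, 0 ≤ t n := fun n => tsum_nonneg fun k => ha0 _
  have hrec : ∀ n, t n = a n + t (n + 1) := by
    intro n
    have h1 := (hsum_n n).tsum_eq_zero_add
    simp only [zero_add] at h1
    have h2 : ∑' (k : ℕ), a (k + 1 + n) = t (n + 1) := by
      apply tsum_congr; intro k; congr 1; omega
    rw [ht_def]; simp only; rw [h1, h2]
  have ht_anti : Antitone t := antitone_nat_of_succ_le fun n => by
    have := hrec n; have := ha0 n; linarith
  have ha_le : ∀ n, a n ≤ t n := fun n => by
    have := hrec n; have := ht_nonneg (n + 1); linarith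
  have ht0 : Tendsto t atTop (𝓝 0) := by
    have heq : t = fun n => (∑' i, a i) - ∑ i ∈ Finset.range n, a i := by
      funext n
      have := ha.sum_add_tsum_nat_add n
      simp only [ht_def]; linarith
    rw [heq]
    have := (tendsto_const_nhds (x := ∑' i, a i) (f := atTop)).sub ha.hasSum.tendsto_sum_nat
    simpa using this
  refine ⟨fun n => Real.sqrt (Real.sqrt (t n)) + (1/2)^n, ?_, ?_, ?_, ?_⟩
  · intro n
    have : (0:ℝ) < (1/2)^n := by positivity
    have := Real.sqrt_nonneg (Real.sqrt (t n))
    linarith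
  · intro m n h
    have h1 : Real.sqrt (Real.sqrt (t n)) ≤ Real.sqrt (Real.sqrt (t m)) :=
      Real.sqrt_le_sqrt (Real.sqrt_le_sqrt (ht_anti h))
    have h2 : ((1:ℝ)/2)^n ≤ (1/2)^m :=
      pow_le_pow_of_le_one (by norm_num) (by norm_num) h
    simpa using add_le_add h1 h2
  · have h1 : Tendsto (fun n => Real.sqrt (Real.sqrt (t n))) atTop (𝓝 0) := by
      have hc : Continuous fun x : ℝ => Real.sqrt (Real.sqrt x) :=
        Real.continuous_sqrt.comp Real.continuous_sqrt
      have := (hc.tendsto' 0 0 (by simp)).comp ht0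
      simpa [Function.comp_def] using this
    have h2 : Tendsto (fun n => ((1:ℝ)/2)^n) atTop (𝓝 0) :=
      tendsto_pow_atTop_nhds_zero_of_lt_one (by norm_num) (by norm_num)
    simpa using h1.add h2
  · set c : ℕ → ℝ := fun n => Real.sqrt (Real.sqrt (t n)) + (1/2)^n with hc_def
    have hcpos : ∀ n, 0 < c n := by
      intro n
      have : (0:ℝ) < (1/2)^n := by positivity
      have := Real.sqrt_nonneg (Real.sqrt (t n))
      simp only [hc_def]; linarith
    have hc2 : ∀ n, Real.sqrt (t n) ≤ c n ^ 2 := by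
      intro n
      have h1 : Real.sqrt (Real.sqrt (t n)) ≤ c n :=
        le_add_of_nonneg_right (by positivity)
      have h2 : Real.sqrt (Real.sqrt (t n)) ^ 2 ≤ c n ^ 2 :=
        pow_le_pow_left₀ (Real.sqrt_nonneg _) h1 2
      rwa [Real.sq_sqrt (Real.sqrt_nonneg _)] at h2
    set e : ℕ → ℝ := fun n => 2 * (Real.sqrt (t n) - Real.sqrt (t (n+1))) with he_def
    have he0 : ∀ n, 0 ≤ e n := by
      intro n
      have := Real.sqrt_le_sqrt (ht_anti (Nat.le_succ n))
      simp only [he_def]; linarith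
    have hesum : Summable e := by
      apply summable_of_sum_range_le (c := 2 * Real.sqrt (t 0)) he0
      intro n
      have htel : ∑ i ∈ Finset.range n, (Real.sqrt (t i) - Real.sqrt (t (i+1)))
          = Real.sqrt (t 0) - Real.sqrt (t n) := Finset.sum_range_sub' _ n
      have : ∑ i ∈ Finset.range n, e i
          = 2 * (Real.sqrt (t 0) - Real.sqrt (t n)) := by
        rw [← htel, Finset.mul_sum]
      rw [this]
      have h := Real.sqrt_nonneg (t n)
      linarith
    refine Summable.of_nonneg_of_le (fun n => div_nonneg (ha0 n) (sq_nonneg _)) ?_ hesum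
    intro n
    rcases eq_or_lt_of_le (ht_nonneg n) with h0 | hpos
    · have htn : t n = 0 := h0.symm
      have han : a n = 0 := le_antisymm (htn ▸ ha_le n) (ha0 n)
      have htn1 : t (n+1) = 0 := le_antisymm (htn ▸ ht_anti (Nat.le_succ n)) (ht_nonneg _)
      simp [he_def, han, htn, htn1]
    · have hs : 0 < Real.sqrt (t n) := Real.sqrt_pos.2 hpos
      have hcn2 : 0 < c n ^ 2 := by positivity
      have step1 : a n / c n ^ 2 ≤ a n / Real.sqrt (t n) :=
        div_le_div_of_nonneg_left (ha0 n) hs (hc2 n)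
      refine step1.trans ?_
      rw [div_le_iff₀ hs]
      have h1 : t n = Real.sqrt (t n) ^ 2 := (Real.sq_sqrt (le_of_lt hpos)).symm
      have h2 : t (n+1) = Real.sqrt (t (n+1)) ^ 2 := (Real.sq_sqrt (ht_nonneg _)).symm
      have han : a n = t n - t (n+1) := by have := hrec n; linarith
      have hsle : Real.sqrt (t (n+1)) ≤ Real.sqrt (t n) :=
        Real.sqrt_le_sqrt (ht_anti (Nat.le_succ n))
      have hs1 : 0 ≤ Real.sqrt (t (n+1)) := Real.sqrt_nonneg _
      simp only [he_def]
      nlinarith [sq_nonneg (Real.sqrt (t n) - Real.sqrt (t (n+1)))]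


lemma exists_factorization {X : Type*} [MeasurableSpace X] (μ : MeasureTheory.Measure X)
    (U : ℕ → Set X) (hU0 : U 0 = ∅) (hmono : Monotone U)
    (hunion : ⋃ n, U n = Set.univ) (hmeas : ∀ n, MeasurableSet (U n))
    (g : X →ₘ[μ] ℂ) (hg : g ∈ Lp ℂ 2 μ) :
    ∃ f h : X →ₘ[μ] ℂ, f ∈ Lp ℂ ∞ μ ∧ h ∈ Lp ℂ 2 μ ∧ f * h = g ∧
      ∀ ε : ℝ, 0 < ε → ∃ n, ∀ᵐ x ∂μ, x ∉ U n → ‖f x‖ ≤ ε := by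
  classical
  have hgm : MemLp (⇑g) 2 μ := Lp.mem_Lp_iff_memLp.1 hg
  set A : ℕ → Set X := fun n => U (n + 1) \ U n with hA_def
  have hAmeas : ∀ n, MeasurableSet (A n) := fun n => (hmeas (n+1)).diff (hmeas n)
  have hAdisj : Pairwise (Function.onFun Disjoint A) := by
    have key : ∀ m n, m < n → Disjoint (A m) (A n) := by
      intro m n hmn
      refine Set.disjoint_left.2 fun x hxm hxn => hxn.2 ?_
      exact hmono (Nat.succ_le_of_lt hmn) hxm.1
    intro m n hne
    rcases lt_or_gt_of_ne hne with h | h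
    · exact key m n h
    · exact (key n m h).symm
  -- the index function N
  have hex : ∀ x : X, ∃ n, x ∈ U (n + 1) := by
    intro x
    have : x ∈ ⋃ n, U n := hunion ▸ Set.mem_univ x
    obtain ⟨m, hm⟩ := Set.mem_iUnion.1 this
    exact ⟨m, hmono (Nat.le_succ m) hm⟩
  set N : X → ℕ := fun x => Nat.find (hex x) with hN_def
  have hNU : ∀ x, x ∈ U (N x + 1) := fun x => Nat.find_spec (hex x)
  have hNnot : ∀ x, x ∉ U (N x) := by
    intro x
    rcases hn : N x with _ | k
    · rw [hU0]; exact Set.notMem_empty x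
    · have hk : k < N x := by omega
      exact Nat.find_min (hex x) hk
  have hNA : ∀ x, x ∈ A (N x) := fun x => ⟨hNU x, hNnot x⟩
  have hNle : ∀ x n, x ∉ U n → n ≤ N x := by
    intro x n hx
    by_contra hlt
    push_neg at hlt
    exact hx (hmono (Nat.succ_le_of_lt hlt) (hNU x))
  have hpre : ∀ n, N ⁻¹' {n} = A n := by
    intro n
    ext x
    simp only [Set.mem_preimage, Set.mem_singleton_iff]
    constructor
    · rintro rfl; exact hNA x
    · rintro ⟨h1, h2⟩
      exact le_antisymm (Nat.find_le h1) (hNle x n h2)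
  have hNmeas : Measurable N := measurable_to_countable' fun n => by
    rw [hpre]; exact hAmeas n
  have hAunion : ⋃ n, A n = Set.univ :=
    Set.eq_univ_of_forall fun x => Set.mem_iUnion.2 ⟨N x, hNA x⟩
  -- the sequence of local L² masses
  set b : ℕ → ℝ≥0∞ := fun n => ∫⁻ x in A n, (‖g x‖₊ : ℝ≥0∞) ^ ((2:ℝ≥0∞).toReal) ∂μ with hb_def
  have htot : ∑' n, b n = ∫⁻ x, (‖g x‖₊ : ℝ≥0∞) ^ ((2:ℝ≥0∞).toReal) ∂μ := by
    rw [← lintegral_iUnion hAmeas hAdisj, hAunion, Measure.restrict_univ]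
  have hfin : (∫⁻ x, (‖g x‖₊ : ℝ≥0∞) ^ ((2:ℝ≥0∞).toReal) ∂μ) < ∞ :=
    (eLpNorm_lt_top_iff_lintegral_rpow_enorm_lt_top two_ne_zero ENNReal.ofNat_ne_top).1 hgm.2
  have htsum_ne : ∑' n, b n ≠ ∞ := by rw [htot]; exact hfin.ne
  set a : ℕ → ℝ := fun n => (b n).toReal with ha_def
  have hb_ne : ∀ n, b n ≠ ∞ := fun n => ne_top_of_le_ne_top htsum_ne (ENNReal.le_tsum n)
  have hb_eq : ∀ n, b n = ENNReal.ofReal (a n) := fun n =>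
    (ENNReal.ofReal_toReal (hb_ne n)).symm
  have ha0 : ∀ n, 0 ≤ a n := fun n => ENNReal.toReal_nonneg
  have hasum : Summable a := ENNReal.summable_toReal htsum_ne
  obtain ⟨c, hc0, hcanti, hctend, hcsum⟩ := aux_weights ha0 hasum
  -- the factor functions
  set F : X → ℂ := fun x => ((c (N x) : ℝ) : ℂ) with hF_def
  have hFmeas : Measurable F := by
    exact (Complex.measurable_ofReal.comp (measurable_from_top.comp hNmeas))
  have hFx : ∀ x, F x ≠ 0 := fun x => by
    simp only [hF_def, ne_eq, Complex.ofReal_eq_zero]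
    exact (hc0 (N x)).ne'
  set H : X → ℂ := fun x => (F x)⁻¹ * g x with hH_def
  have hHsm : AEStronglyMeasurable H μ :=
    (hFmeas.inv.aestronglyMeasurable).mul g.aestronglyMeasurable
  have hFH : ∀ x, F x * H x = g x := fun x => by
    rw [hH_def]; exact mul_inv_cancel_left₀ (hFx x) _
  -- F is bounded
  have hFnorm : ∀ x, ‖F x‖ = c (N x) := by
    intro x
    rw [hF_def]
    simp only [Complex.norm_real, Real.norm_eq_abs]
    exact abs_of_pos (hc0 (N x))
  have memF : MemLp F ∞ μ := by
    refine memLp_top_of_bound hFmeas.aestronglyMeasurable (c 0)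
      (Filter.Eventually.of_forall fun x => ?_)
    rw [hFnorm]
    exact hcanti (Nat.zero_le _)
  -- H is in L²
  have memH : MemLp H 2 μ := by
    refine ⟨hHsm, ?_⟩
    rw [eLpNorm_lt_top_iff_lintegral_rpow_enorm_lt_top two_ne_zero ENNReal.ofNat_ne_top]
    simp only [enorm_eq_nnnorm]
    have hsplit : (∫⁻ x, (‖H x‖₊ : ℝ≥0∞) ^ ((2:ℝ≥0∞).toReal) ∂μ)
        = ∑' n, ∫⁻ x in A n, (‖H x‖₊ : ℝ≥0∞) ^ ((2:ℝ≥0∞).toReal) ∂μ := by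
      rw [← lintegral_iUnion hAmeas hAdisj, hAunion, Measure.restrict_univ]
    rw [hsplit]
    have hterm : ∀ n, (∫⁻ x in A n, (‖H x‖₊ : ℝ≥0∞) ^ ((2:ℝ≥0∞).toReal) ∂μ)
        = ENNReal.ofReal (a n / c n ^ 2) := by
      intro n
      have hcong : (∫⁻ x in A n, (‖H x‖₊ : ℝ≥0∞) ^ ((2:ℝ≥0∞).toReal) ∂μ)
          = ∫⁻ x in A n,
              ENNReal.ofReal ((c n)⁻¹ ^ 2) * ((‖g x‖₊ : ℝ≥0∞) ^ ((2:ℝ≥0∞).toReal)) ∂μ := by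
        apply setLIntegral_congr_fun (hAmeas n)
        intro x hx
        have hNx : N x = n := by
          have : x ∈ N ⁻¹' {n} := by rw [hpre n]; exact hx
          exact this
        have hnorm : (‖H x‖₊ : ℝ≥0∞) = ENNReal.ofReal ((c n)⁻¹) * (‖g x‖₊ : ℝ≥0∞) := by
          rw [hH_def]
          simp only [nnnorm_mul, ENNReal.coe_mul]
          congr 1
          rw [← enorm_eq_nnnorm, ← ofReal_norm]
          congr 1
          rw [norm_inv, hFnorm, hNx]
        beta_reduce
        rw [hnorm, ENNReal.mul_rpow_of_nonneg _ _ (by simp)]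
        congr 1
        have h2 : ((2:ℝ≥0∞)).toReal = ((2:ℕ):ℝ) := by norm_num
        rw [h2, ENNReal.rpow_natCast]
        exact (ENNReal.ofReal_pow (inv_nonneg.2 (hc0 n).le) 2).symm
      rw [hcong, lintegral_const_mul' _ _ ENNReal.ofReal_ne_top]
      have hb' : (∫⁻ x in A n, (‖g x‖₊ : ℝ≥0∞) ^ ((2:ℝ≥0∞).toReal) ∂μ)
          = ENNReal.ofReal (a n) := hb_eq n
      rw [hb', ← ENNReal.ofReal_mul (by positivity)]
      congr 1
      rw [div_eq_mul_inv, mul_comm]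
      congr 1
      rw [inv_pow]
    calc ∑' n, ∫⁻ x in A n, (‖H x‖₊ : ℝ≥0∞) ^ ((2:ℝ≥0∞).toReal) ∂μ
        = ∑' n, ENNReal.ofReal (a n / c n ^ 2) := by
          exact tsum_congr hterm
      _ = ENNReal.ofReal (∑' n, a n / c n ^ 2) :=
          (ENNReal.ofReal_tsum_of_nonneg (fun n => div_nonneg (ha0 n) (sq_nonneg _)) hcsum).symm
      _ < ∞ := ENNReal.ofReal_lt_top
  -- assemble
  refine ⟨AEEqFun.mk F hFmeas.aestronglyMeasurable, AEEqFun.mk H hHsm, ?_, ?_, ?_, ?_⟩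
  · exact Lp.mem_Lp_iff_memLp.2 (memF.ae_eq (AEEqFun.coeFn_mk F _).symm)
  · exact Lp.mem_Lp_iff_memLp.2 (memH.ae_eq (AEEqFun.coeFn_mk H _).symm)
  · rw [AEEqFun.mk_mul_mk]
    have h1 : AEEqFun.mk (F * H) (hFmeas.aestronglyMeasurable.mul hHsm)
        = AEEqFun.mk (⇑g) g.aestronglyMeasurable :=
      AEEqFun.mk_eq_mk.2 (Filter.Eventually.of_forall hFH)
    rw [h1, AEEqFun.mk_coeFn]
  · intro ε hε
    obtain ⟨n, hn⟩ := (hctend.eventually (gt_mem_nhds hε)).exists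
    refine ⟨n, ?_⟩
    filter_upwards [AEEqFun.coeFn_mk F hFmeas.aestronglyMeasurable] with x hx hxU
    rw [hx, hFnorm]
    exact le_of_lt (lt_of_le_of_lt (hcanti (hNle x n hxU)) hn)

/-- Under the exhaustion hypothesis (Borel sets `U₁ ⊆ U₂ ⊆ ⋯` covering `X`
with compact closures and `μ(Uₙ \ Uₙ₋₁) > 0`, with `U 0 = ∅`), the `L^∞(X,μ)`-module
`L²(X,μ)` is not faithfully flat. -/
theorem L2_not_faithfully_flat
    {X : Type*} [TopologicalSpace X] [T2Space X] [LocallyCompactSpace X]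
    [MeasurableSpace X] [BorelSpace X]
    (μ : MeasureTheory.Measure X) [μ.Regular]
    (U : ℕ → Set X) (hU0 : U 0 = ∅) (hmono : Monotone U)
    (hunion : ⋃ n, U n = Set.univ) (hmeas : ∀ n, MeasurableSet (U n))
    (hcpt : ∀ n, IsCompact (closure (U n)))
    (hpos : ∀ n, 0 < μ (U (n + 1) \ U n)) :
    ¬ Module.FaithfullyFlat (Linfty μ) (L2 μ) := by
  intro hFF
  classical
  -- the ideal of functions "vanishing at infinity" with respect to the exhaustion
  set J : Ideal (Linfty μ) :=
    { carrier := {f : Linfty μ |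
        ∀ ε : ℝ, 0 < ε → ∃ n, ∀ᵐ x ∂μ, x ∉ U n → ‖(f : X →ₘ[μ] ℂ) x‖ ≤ ε}
      add_mem' := by
        rintro a b ha hb ε hε
        obtain ⟨n₁, h₁⟩ := ha (ε/2) (by linarith)
        obtain ⟨n₂, h₂⟩ := hb (ε/2) (by linarith)
        refine ⟨max n₁ n₂, ?_⟩
        have hco : ((a + b : Linfty μ) : X →ₘ[μ] ℂ)
            = (a : X →ₘ[μ] ℂ) + (b : X →ₘ[μ] ℂ) := rfl
        rw [hco]
        filter_upwards [h₁, h₂, AEEqFun.coeFn_add (a : X →ₘ[μ] ℂ) (b : X →ₘ[μ] ℂ)]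
          with x hx1 hx2 hx3 hxU
        have hxU1 : x ∉ U n₁ := fun h => hxU (hmono (le_max_left _ _) h)
        have hxU2 : x ∉ U n₂ := fun h => hxU (hmono (le_max_right _ _) h)
        rw [hx3]
        calc ‖(a : X →ₘ[μ] ℂ) x + (b : X →ₘ[μ] ℂ) x‖
            ≤ ‖(a : X →ₘ[μ] ℂ) x‖ + ‖(b : X →ₘ[μ] ℂ) x‖ := norm_add_le _ _
          _ ≤ ε/2 + ε/2 := add_le_add (hx1 hxU1) (hx2 hxU2)
          _ = ε := by ring
      zero_mem' := by
        intro ε hε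
        refine ⟨0, ?_⟩
        have hco : ((0 : Linfty μ) : X →ₘ[μ] ℂ) = 0 := rfl
        rw [hco]
        filter_upwards [AEEqFun.coeFn_zero (α := X) (μ := μ) (β := ℂ)] with x hx _
        rw [hx]
        simp [le_of_lt hε]
      smul_mem' := by
        rintro c f hf ε hε
        have hcmem : MemLp (⇑(c : X →ₘ[μ] ℂ)) ∞ μ := Lp.mem_Lp_iff_memLp.1 c.2
        have hEne : eLpNormEssSup (⇑(c : X →ₘ[μ] ℂ)) μ ≠ ∞ := by
          have := hcmem.2
          rwa [eLpNorm_exponent_top, lt_top_iff_ne_top] at this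
        set C : ℝ := (eLpNormEssSup (⇑(c : X →ₘ[μ] ℂ)) μ).toReal with hC_def
        have hC0 : 0 ≤ C := ENNReal.toReal_nonneg
        have hae : ∀ᵐ x ∂μ, ‖(c : X →ₘ[μ] ℂ) x‖ ≤ C := by
          filter_upwards [ae_le_eLpNormEssSup (f := ⇑(c : X →ₘ[μ] ℂ)) (μ := μ)] with x hx
          have := ENNReal.toReal_mono hEne hx
          simpa using this
        obtain ⟨n, hn⟩ := hf (ε / (C + 1)) (by positivity)
        refine ⟨n, ?_⟩
        have hco : ((c • f : Linfty μ) : X →ₘ[μ] ℂ)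
            = (c : X →ₘ[μ] ℂ) * (f : X →ₘ[μ] ℂ) := rfl
        rw [hco]
        filter_upwards [hn, hae, AEEqFun.coeFn_mul (c : X →ₘ[μ] ℂ) (f : X →ₘ[μ] ℂ)]
          with x hx1 hx2 hx3 hxU
        simp only [Pi.mul_apply] at hx3
        rw [hx3]
        have h1 : ‖(c : X →ₘ[μ] ℂ) x * (f : X →ₘ[μ] ℂ) x‖
            = ‖(c : X →ₘ[μ] ℂ) x‖ * ‖(f : X →ₘ[μ] ℂ) x‖ := norm_mul _ _
        rw [h1]
        have h2 : ‖(c : X →ₘ[μ] ℂ) x‖ * ‖(f : X →ₘ[μ] ℂ) x‖ ≤ C * (ε / (C + 1)) :=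
          mul_le_mul hx2 (hx1 hxU) (norm_nonneg _) hC0
        refine h2.trans ?_
        rw [div_eq_mul_inv]
        have h3 : C * (ε * (C + 1)⁻¹) = (C * (C+1)⁻¹) * ε := by ring
        rw [h3]
        have h4 : C * (C+1)⁻¹ ≤ 1 := by
          rw [mul_inv_le_iff₀ (by linarith)]
          linarith
        nlinarith } with hJ_def
  -- J is a proper ideal
  have hJne : J ≠ ⊤ := by
    intro htop
    have h1 : (1 : Linfty μ) ∈ J := htop ▸ Submodule.mem_top
    obtain ⟨n, hn⟩ := h1 (1/2) (by norm_num)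
    have hco : ((1 : Linfty μ) : X →ₘ[μ] ℂ) = 1 := rfl
    rw [hco] at hn
    have hae : ∀ᵐ x ∂μ, x ∈ U n := by
      filter_upwards [hn, AEEqFun.coeFn_one (α := X) (μ := μ) (β := ℂ)] with x hx1 hx2
      by_contra hxU
      have := hx1 hxU
      rw [hx2] at this
      norm_num at this
    have hnull : μ {x | x ∉ U n} = 0 := ae_iff.1 hae
    have hsub : U (n+1) \ U n ⊆ {x | x ∉ U n} := fun x hx => hx.2
    have := measure_mono_null hsub hnull
    exact absurd this (hpos n).ne'
  -- J • L² = L²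
  have hJsmul : J • (⊤ : Submodule (Linfty μ) (L2 μ)) = ⊤ := by
    rw [eq_top_iff]
    rintro ⟨g, hg⟩ -
    obtain ⟨f, h, hfi, hh2, hfh, hfJ⟩ :=
      exists_factorization μ U hU0 hmono hunion hmeas g hg
    have hfL : (⟨f, hfi⟩ : Linfty μ) ∈ J := hfJ
    have hgfh : (⟨g, hg⟩ : L2 μ) = (⟨f, hfi⟩ : Linfty μ) • (⟨h, hh2⟩ : L2 μ) := by
      apply Subtype.ext
      show g = _
      rw [SetLike.val_smul, Algebra.smul_def]
      exact hfh.symm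
    rw [hgfh]
    exact Submodule.smul_mem_smul hfL Submodule.mem_top
  exact ((Module.FaithfullyFlat.iff_flat_and_proper_ideal (Linfty μ) (L2 μ)).1 hFF).2
    J hJne hJsmul
end
end
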